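/- Let R ∈ ℝ^{n×n} be invertible upper triangular, S ∈ ℝ^{n×n} symmetric, and P = R⁻ᵀ S R⁻¹. Suppose the columns r_j = R e_j satisfy 2 P r_j = r_{j+1} + r_{|j-1|} for j = 0, ..., n-2 (with r indices interpreted as columns of R, using r_{|−1|} = r_1, and where r_n := 2Pr_{n-1} - r_{n-2} for the last step). Then P is symmetric tridiagonal, i.e., P_{jl} = 0 whenever |j - l| ≥ 2. -/
import Mathlib


open Matrix

/-- Tridiagonal structure of the ROM propagator: if `R` is invertible upper
triangular, `S` symmetric, `P = R⁻ᵀ S R⁻¹`, and the columns `r_j` of `R` satisfy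
`2 P r_j = r_{j+1} + r_{|j-1|}` for `j = 0,…,n-2`, then `P` is (symmetric)
tridiagonal: `P j l = 0` whenever `|j - l| ≥ 2`. -/
theorem stmt_10 {n : ℕ}
    (R S P : Matrix (Fin n) (Fin n) ℝ)
    (hRtri : R.BlockTriangular id) (hRinv : IsUnit R.det)
    (hS : S.IsSymm)
    (hP : P = (R⁻¹)ᵀ * S * R⁻¹)
    (r : ℕ → Fin n → ℝ)
    (hr : ∀ j (hj : j < n), r j = fun i => R i ⟨j, hj⟩)
    (hrec : ∀ j : ℕ, j + 2 ≤ n →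
      (2 : ℝ) • (P *ᵥ r j) = r (j + 1) + r (((j : ℤ) - 1).natAbs)) :
    ∀ j l : Fin n, 2 ≤ |(j : ℤ) - (l : ℤ)| → P j l = 0 := by
  have hPsymm : Pᵀ = P := by
    subst hP
    simp [Matrix.transpose_mul, Matrix.transpose_transpose, hS.eq, Matrix.mul_assoc]
  haveI := R.invertibleOfIsUnitDet hRinv
  have hRinvTri : (R⁻¹).BlockTriangular id :=
    Matrix.blockTriangular_inv_of_blockTriangular hRtri
  have hkey : ∀ j l : Fin n, (l : ℕ) + 2 ≤ (j : ℕ) → P j l = 0 := by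
    intro j l hjl
    have hPR : ∀ m : Fin n, (m : ℕ) + 2 ≤ (j : ℕ) → (P * R) j m = 0 := by
      intro m hm
      have hm2 : (m : ℕ) + 2 ≤ n := hm.trans j.isLt.le
      have hrecm := congrFun (hrec (m : ℕ) hm2) j
      have hmlt : (m : ℕ) < n := by omega
      have hm1lt : (m : ℕ) + 1 < n := by omega
      have ha : (((m : ℕ) : ℤ) - 1).natAbs ≤ (m : ℕ) + 1 := by omega
      have halt : (((m : ℕ) : ℤ) - 1).natAbs < n := by omega
      have h1 : r ((m : ℕ) + 1) j = 0 := by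
        rw [hr ((m : ℕ) + 1) hm1lt]
        exact hRtri (show (⟨(m : ℕ) + 1, hm1lt⟩ : Fin n) < j from by
          simp [Fin.lt_def]; omega)
      have h2 : r ((((m : ℕ) : ℤ) - 1).natAbs) j = 0 := by
        rw [hr _ halt]
        exact hRtri (show (⟨(((m : ℕ) : ℤ) - 1).natAbs, halt⟩ : Fin n) < j from by
          simp [Fin.lt_def]; omega)
      have hcol : (P *ᵥ r (m : ℕ)) j = (P * R) j m := by
        rw [hr (m : ℕ) hmlt]
        simp [Matrix.mulVec, Matrix.mul_apply, dotProduct]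
      rw [Pi.smul_apply, hcol, Pi.add_apply, h1, h2] at hrecm
      have : (2 : ℝ) ≠ 0 := by norm_num
      field_simp at hrecm
      simpa using hrecm
    have hPRR : P = P * R * R⁻¹ := by
      rw [Matrix.mul_assoc, Matrix.mul_nonsing_inv R hRinv, Matrix.mul_one]
    rw [hPRR, Matrix.mul_apply]
    apply Finset.sum_eq_zero
    intro m _
    by_cases hc : (m : ℕ) + 2 ≤ (j : ℕ)
    · rw [hPR m hc]; ring
    · have : R⁻¹ m l = 0 := hRinvTri (show (l : ℕ) < (m : ℕ) from by omega)
      rw [this]; ring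
  intro j l h
  by_cases hc : (l : ℕ) + 2 ≤ (j : ℕ)
  · exact hkey j l hc
  · have hc' : (j : ℕ) + 2 ≤ (l : ℕ) := by
      rcases abs_cases ((j : ℤ) - (l : ℤ)) with ⟨e, _⟩ | ⟨e, _⟩ <;> omega
    have := congrFun (congrFun hPsymm j) l
    simp only [Matrix.transpose_apply] at this
    rw [← this]
    exact hkey l j hc'
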